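/- Let x ∈ gl(V) with minimal polynomial p^{m_1}, p monic irreducible, such that x is neither cyclic nor semisimple (i.e., the number r of elementary divisors satisfies r > 1 and m_1 > 1). Then C_{gl(V)}(x) has a non-central abelian ideal; in particular it is not reductive. -/

import Mathlib

open Polynomial

variable (F : Type*) [Field F]

attribute [local instance 100] LieRing.ofAssociativeRing

/-- The centralizer of an element of an associative algebra, as a Lie subalgebra. -/
def lieCentralizer {A : Type*} [Ring A] [Algebra F A] (a : A) : LieSubalgebra F A where
  carrier := {y | y * a = a * y}
  add_mem' := by
    intro X Y hX hY
    simp only [Set.mem_setOf_eq] at *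
    rw [add_mul, mul_add, hX, hY]
  zero_mem' := by simp
  smul_mem' := by
    intro c X hX
    simp only [Set.mem_setOf_eq] at *
    rw [smul_mul_assoc, mul_smul_comm, hX]
  lie_mem' := by
    intro X Y hX hY
    simp only [Set.mem_setOf_eq] at *
    show ⁅X, Y⁆ * a = a * ⁅X, Y⁆
    rw [Ring.lie_def]
    calc (X * Y - Y * X) * a = X * (Y * a) - Y * (X * a) := by noncomm_ring
      _ = X * (a * Y) - Y * (a * X) := by rw [hY, hX]
      _ = (X * a) * Y - (Y * a) * X := by noncomm_ring
      _ = (a * X) * Y - (a * Y) * X := by rw [hX, hY]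
      _ = a * (X * Y - Y * X) := by noncomm_ring

/-- A Lie algebra is reductive if every solvable ideal is contained in its center. -/
def IsReductiveLie (R L : Type*) [CommRing R] [LieRing L] [LieAlgebra R L] : Prop :=
  ∀ I : LieIdeal R L, LieAlgebra.IsSolvable I → I ≤ LieAlgebra.center R L

section Helpers

variable {F} {V : Type*} [AddCommGroup V] [Module F V]

/-- `q ↦ aeval x q v` as an `F`-linear map. -/
private noncomputable def aevalAt (x : Module.End F V) (v : V) : F[X] →ₗ[F] V where
  toFun q := aeval x q v
  map_add' a b := by simp
  map_smul' c a := by simp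

@[simp] private lemma aevalAt_apply (x : Module.End F V) (v : V) (q : F[X]) :
    aevalAt x v q = aeval x q v := rfl

private lemma aeval_mul_apply (x : Module.End F V) (a b : F[X]) (v : V) :
    aeval x (a * b) v = aeval x a (aeval x b v) := by
  rw [map_mul]; rfl

private lemma commute_aeval (x y : Module.End F V) (h : y * x = x * y) (q : F[X]) :
    y * aeval x q = aeval x q * y := by
  induction q using Polynomial.induction_on' with
  | add a b ha hb => rw [map_add, mul_add, add_mul, ha, hb]
  | monomial n c =>
    rw [← Polynomial.C_mul_X_pow_eq_monomial, map_mul, aeval_C, map_pow, aeval_X]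
    exact ((show Commute y (algebraMap F (Module.End F V) c) from (Algebra.commutes c y).symm).mul_right
      ((show Commute y x from h).pow_right n)).eq

private lemma pow_mem_inv (x : Module.End F V) (S : Submodule F V)
    (hS : ∀ v ∈ S, x v ∈ S) (n : ℕ) : ∀ v ∈ S, (x ^ n) v ∈ S := by
  induction n with
  | zero => intro v hv; simpa using hv
  | succ n ih =>
    intro v hv
    rw [pow_succ', Module.End.mul_apply]
    exact hS _ (ih v hv)

private lemma aeval_mem_inv (x : Module.End F V) (S : Submodule F V)
    (hS : ∀ v ∈ S, x v ∈ S) (q : F[X]) : ∀ v ∈ S, aeval x q v ∈ S := by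
  induction q using Polynomial.induction_on' with
  | add a b ha hb =>
    intro v hv
    rw [map_add, LinearMap.add_apply]
    exact S.add_mem (ha v hv) (hb v hv)
  | monomial n c =>
    intro v hv
    rw [← Polynomial.C_mul_X_pow_eq_monomial, map_mul, aeval_C, map_pow, aeval_X,
      Module.End.mul_apply, Module.algebraMap_end_apply]
    exact S.smul_mem c (pow_mem_inv x S hS n v hv)

end Helpers

set_option maxHeartbeats 1000000 in
/-- If the minimal polynomial of `x` is `p ^ m` with `p` monic irreducible, and `x` is
neither cyclic nor semisimple (`r > 1` elementary divisors and `m > 1`), then the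
centralizer of `x` has a non-central abelian ideal; in particular it is not reductive. -/
theorem stmt10 {V : Type*} [AddCommGroup V] [Module F V] [FiniteDimensional F V]
    (x : Module.End F V) (p : F[X]) (m r : ℕ)
    (hp : p.Monic) (hirr : Irreducible p) (hmin : minpoly F x = p ^ m)
    (hr : Module.finrank F (LinearMap.ker (Polynomial.aeval x p)) = r * p.natDegree)
    (hr1 : 1 < r) (hm1 : 1 < m) :
    (∃ J : LieIdeal F (lieCentralizer F x),
        (∀ a b : lieCentralizer F x, a ∈ J → b ∈ J → ⁅a, b⁆ = 0) ∧
          ¬ J ≤ LieAlgebra.center F (lieCentralizer F x)) ∧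
      ¬ IsReductiveLie F (lieCentralizer F x) := by
  classical
  obtain ⟨k, rfl⟩ : ∃ k, m = k + 2 := ⟨m - 2, by omega⟩
  set d := p.natDegree with hd
  have hdpos : 0 < d := hirr.natDegree_pos
  have hp0 : p ≠ 0 := hp.ne_zero
  have hprime : Prime p := hirr.prime
  have hPm : aeval x (p ^ (k + 2)) = 0 := by rw [← hmin]; exact minpoly.aeval F x
  have hPm_apply : ∀ v : V, aeval x (p ^ (k + 2)) v = 0 := by
    intro v; rw [hPm]; rfl
  -- A. a vector of maximal order
  have hA : ∃ v₁ : V, aeval x (p ^ (k + 1)) v₁ ≠ 0 := by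
    by_contra hc
    push_neg at hc
    have : aeval x (p ^ (k + 1)) = 0 := LinearMap.ext fun v => hc v
    have hdvd : p ^ (k + 2) ∣ p ^ (k + 1) := hmin ▸ minpoly.dvd F x this
    have hdeg := Polynomial.natDegree_le_of_dvd hdvd (pow_ne_zero _ hp0)
    rw [Polynomial.natDegree_pow, Polynomial.natDegree_pow] at hdeg
    have : k + 2 ≤ k + 1 := Nat.le_of_mul_le_mul_right (by linarith [hdeg]) hdpos
    omega
  obtain ⟨v₁, hv₁⟩ := hA
  -- B. the annihilator of v₁ is exactly (p ^ (k+2))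
  have hann : ∀ q : F[X], aeval x q v₁ = 0 → p ^ (k + 2) ∣ q := by
    intro q hq
    set dg := EuclideanDomain.gcd q (p ^ (k + 2)) with hdg
    have hdv : aeval x dg v₁ = 0 := by
      rw [hdg, EuclideanDomain.gcd_eq_gcd_ab, map_add, LinearMap.add_apply,
        mul_comm q _, mul_comm (p ^ (k + 2)) _, aeval_mul_apply, aeval_mul_apply,
        hq, hPm_apply]
      simp
    have hdp : dg ∣ p ^ (k + 2) := EuclideanDomain.gcd_dvd_right _ _
    obtain ⟨i, him, hassoc⟩ := (dvd_prime_pow hprime (k + 2)).mp hdp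
    have hpi : aeval x (p ^ i) v₁ = 0 := by
      obtain ⟨u, hu⟩ := hassoc
      rw [← hu, mul_comm, aeval_mul_apply, hdv, map_zero]
    have hieq : i = k + 2 := by
      by_contra hne
      apply hv₁
      have hsplit1 : p ^ (k + 1) = p ^ (k + 1 - i) * p ^ i := by
        rw [← pow_add]; congr 1; omega
      rw [hsplit1, aeval_mul_apply, hpi, map_zero]
    subst hieq
    exact dvd_trans hassoc.symm.dvd (EuclideanDomain.gcd_dvd_left q _)
  -- the cyclic subspace generated by v₁
  set L : F[X] →ₗ[F] V := aevalAt x v₁ with hL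
  set V₁ : Submodule F V := LinearMap.range L with hV₁
  have hLval : ∀ q : F[X], L q = aeval x q v₁ := fun q => rfl
  have hLzero : ∀ q : F[X], L q = 0 ↔ p ^ (k + 2) ∣ q := by
    intro q
    constructor
    · intro h; exact hann q h
    · rintro ⟨s, rfl⟩
      show aeval x _ v₁ = 0
      rw [aeval_mul_apply, hPm_apply]
  have hV₁inv : ∀ v ∈ V₁, x v ∈ V₁ := by
    rintro v ⟨q, rfl⟩
    exact ⟨X * q, by simp only [aevalAt_apply, hL]; rw [aeval_mul_apply, aeval_X]⟩
  -- D. a maximal x-invariant complement candidate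
  obtain ⟨U, ⟨hUinv, hUV₁⟩, hUmax⟩ :
      ∃ U : Submodule F V, ((∀ v ∈ U, x v ∈ U) ∧ U ⊓ V₁ = ⊥) ∧
        ∀ U' : Submodule F V, ((∀ v ∈ U', x v ∈ U') ∧ U' ⊓ V₁ = ⊥) →
          Module.finrank F U' ≤ Module.finrank F U := by
    set S : Set (Submodule F V) := {U | (∀ v ∈ U, x v ∈ U) ∧ U ⊓ V₁ = ⊥} with hS
    set Sn : Set ℕ := (fun U : Submodule F V => Module.finrank F U) '' S with hSn
    have hbotS : (⊥ : Submodule F V) ∈ S := by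
      constructor
      · intro v hv
        rw [Submodule.mem_bot] at hv ⊢
        rw [hv, map_zero]
      · exact bot_inf_eq V₁
    have hne : Sn.Nonempty := ⟨_, ⟨⊥, hbotS, rfl⟩⟩
    have hbdd : BddAbove Sn := by
      refine ⟨Module.finrank F V, ?_⟩
      rintro n ⟨U, _, rfl⟩
      exact Submodule.finrank_le U
    obtain ⟨U, hUS, hUrk⟩ := Nat.sSup_mem hne hbdd
    refine ⟨U, hUS, fun U' hU' => ?_⟩
    calc Module.finrank F U' ≤ sSup Sn := le_csSup hbdd ⟨U', hU', rfl⟩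
      _ = Module.finrank F U := hUrk.symm
  have hsplit : U ⊔ V₁ = ⊤ := by
    have hsupinv : ∀ v ∈ U ⊔ V₁, x v ∈ U ⊔ V₁ := by
      intro v hv
      obtain ⟨a', ha', b', hb', rfl⟩ := Submodule.mem_sup.mp hv
      rw [map_add]
      exact Submodule.add_mem _ (Submodule.mem_sup_left (hUinv a' ha'))
        (Submodule.mem_sup_right (hV₁inv b' hb'))
    have hstep : ∀ v : V, aeval x p v ∈ U ⊔ V₁ → v ∈ U ⊔ V₁ := by
      intro v hv
      by_contra hvn
      obtain ⟨u, hu, w, ⟨f, rfl⟩, huw⟩ := Submodule.mem_sup.mp hv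
      have h0 : aeval x (p ^ (k + 1)) (aeval x p v) = 0 := by
        rw [← aeval_mul_apply, ← pow_succ]
        exact hPm_apply v
      have hLf : aeval x (p ^ (k + 1)) (L f) = L (p ^ (k + 1) * f) := by
        rw [hLval, hLval, aeval_mul_apply]
      have h1 : aeval x (p ^ (k + 1)) u + L (p ^ (k + 1) * f) = 0 := by
        have := congrArg (aeval x (p ^ (k + 1))) huw
        rwa [map_add, hLf, h0] at this
      have h2 : aeval x (p ^ (k + 1)) u ∈ U := aeval_mem_inv x U hUinv _ u hu
      have h3 : L (p ^ (k + 1) * f) ∈ U ⊓ V₁ :=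
        ⟨by rw [eq_neg_of_add_eq_zero_right h1]; exact U.neg_mem h2, ⟨_, rfl⟩⟩
      rw [hUV₁, Submodule.mem_bot] at h3
      have h5 : p ∣ f := by
        have hd : p ^ (k + 1) * p ∣ p ^ (k + 1) * f := by
          rw [← pow_succ]; exact (hLzero _).mp h3
        exact (mul_dvd_mul_iff_left (pow_ne_zero (k + 1) hp0)).mp hd
      obtain ⟨g0, rfl⟩ := h5
      set v' := v - L g0 with hv'def
      have hPv' : aeval x p v' = u := by
        rw [hv'def, map_sub]
        have hg0 : aeval x p (L g0) = L (p * g0) := by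
          rw [hLval, hLval, aeval_mul_apply]
        rw [hg0, ← huw]
        abel
      have hv'n : v' ∉ U ⊔ V₁ := by
        intro hmem
        apply hvn
        have hLg : L g0 ∈ U ⊔ V₁ := Submodule.mem_sup_right ⟨g0, rfl⟩
        have := Submodule.add_mem _ hmem hLg
        rwa [hv'def, sub_add_cancel] at this
      set L' : F[X] →ₗ[F] V := aevalAt x v' with hL'
      have hL'val : ∀ q : F[X], L' q = aeval x q v' := fun q => rfl
      set U' : Submodule F V := U ⊔ LinearMap.range L' with hU'
      have hU'inv : ∀ w ∈ U', x w ∈ U' := by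
        intro w hw
        obtain ⟨a, ha, b, ⟨q, rfl⟩, rfl⟩ := Submodule.mem_sup.mp hw
        rw [map_add]
        apply Submodule.add_mem
        · exact Submodule.mem_sup_left (hUinv a ha)
        · exact Submodule.mem_sup_right
            ⟨X * q, by rw [hL'val, hL'val, aeval_mul_apply, aeval_X]⟩
      have hU'V₁ : U' ⊓ V₁ = ⊥ := by
        rw [eq_bot_iff]
        rintro w ⟨hwU', hwV₁⟩
        obtain ⟨a, ha, b, ⟨q, rfl⟩, rfl⟩ := Submodule.mem_sup.mp hwU'
        by_cases hpq : p ∣ q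
        · obtain ⟨q', rfl⟩ := hpq
          have hLq : L' (p * q') ∈ U := by
            have he : L' (p * q') = aeval x q' u := by
              rw [hL'val, mul_comm, aeval_mul_apply, hPv']
            rw [he]
            exact aeval_mem_inv x U hUinv q' u hu
          have hmem2 : a + L' (p * q') ∈ U ⊓ V₁ := ⟨Submodule.add_mem _ ha hLq, hwV₁⟩
          rw [hUV₁] at hmem2
          exact hmem2
        · exfalso
          have hcop : IsCoprime q (p ^ (k + 2)) :=
            ((hirr.coprime_iff_not_dvd).mpr hpq).symm.pow_right
          obtain ⟨A, B, hAB⟩ := hcop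
          apply hv'n
          have hv'eq : v' = aeval x A (L' q) := by
            have h6 : aeval x (A * q + B * p ^ (k + 2)) v' = v' := by
              rw [hAB]; simp
            rw [← h6, map_add, LinearMap.add_apply, aeval_mul_apply, aeval_mul_apply,
              hPm_apply, map_zero, add_zero, hL'val]
          rw [hv'eq]
          have hLq' : L' q ∈ U ⊔ V₁ := by
            have he : (L' q : V) = (a + L' q) - a := by abel
            rw [he]
            exact Submodule.sub_mem _ (Submodule.mem_sup_right hwV₁)
              (Submodule.mem_sup_left ha)
          exact aeval_mem_inv x _ hsupinv A _ hLq'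
      have hlt : U < U' := by
        apply lt_of_le_of_ne le_sup_left
        intro hEq
        apply hv'n
        have hv'mem : v' ∈ U' := Submodule.mem_sup_right ⟨1, by rw [hL'val]; simp⟩
        have hv'U : v' ∈ U := by rw [hEq, ← hU']; exact hv'mem
        exact Submodule.mem_sup_left hv'U
      have hmax := hUmax U' ⟨hU'inv, hU'V₁⟩
      have := Submodule.finrank_lt_finrank_of_lt hlt
      omega
    have hall : ∀ n : ℕ, ∀ v : V, aeval x (p ^ n) v ∈ U ⊔ V₁ → v ∈ U ⊔ V₁ := by
      intro n
      induction n with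
      | zero => intro v hv; simpa using hv
      | succ n ih =>
        intro v hv
        exact hstep v (ih (aeval x p v) (by rwa [← aeval_mul_apply, ← pow_succ]))
    rw [eq_top_iff]
    intro v _
    exact hall (k + 2) v (by rw [hPm_apply]; exact Submodule.zero_mem _)
  have hdec : ∀ v : V, ∃ u ∈ U, ∃ q : F[X], v = u + L q := by
    intro v
    have hv : v ∈ U ⊔ V₁ := hsplit ▸ Submodule.mem_top
    obtain ⟨u, hu, w, ⟨q, rfl⟩, rfl⟩ := Submodule.mem_sup.mp hv
    exact ⟨u, hu, q, rfl⟩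
  -- E. a nonzero vector in U ∩ ker (aeval x p)
  obtain ⟨w₀, hw₀U, hw₀ne, hPw₀⟩ :
      ∃ w₀ : V, w₀ ∈ U ∧ w₀ ≠ 0 ∧ aeval x p w₀ = 0 := by
    set W : Submodule F V := LinearMap.ker (aeval x p) with hW
    haveI : Module.Finite F (Polynomial.degreeLT F d) :=
      Module.Finite.equiv (Polynomial.degreeLTEquiv F d).symm
    set T : F[X] →ₗ[F] V := L.comp (LinearMap.mulLeft F (p ^ (k + 1))) with hT
    have hTval : ∀ q : F[X], T q = L (p ^ (k + 1) * q) := fun q => rfl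
    have hsub : W ⊓ V₁ ≤ Submodule.map T (Polynomial.degreeLT F d) := by
      rintro w ⟨hwW, ⟨q, rfl⟩⟩
      have h0 : L (p * q) = 0 := by
        have hq : aeval x p (L q) = L (p * q) := by rw [hLval, hLval, aeval_mul_apply]
        rw [← hq]
        exact hwW
      have hdvd : p ^ (k + 1) ∣ q := by
        have h2 : p * p ^ (k + 1) ∣ p * q := by
          rw [← pow_succ']; exact (hLzero _).mp h0
        exact (mul_dvd_mul_iff_left hp0).mp h2
      obtain ⟨s, rfl⟩ := hdvd
      refine Submodule.mem_map.mpr ⟨s %ₘ p, ?_, ?_⟩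
      · rw [Polynomial.mem_degreeLT]
        exact (Polynomial.degree_modByMonic_lt s hp).trans_le
          (le_of_eq (Polynomial.degree_eq_natDegree hp0))
      · rw [hTval]
        have hmod : s %ₘ p + p * (s /ₘ p) = s := Polynomial.modByMonic_add_div s p
        have hsplit2 : p ^ (k + 1) * s = p ^ (k + 1) * (s %ₘ p) + p ^ (k + 2) * (s /ₘ p) := by
          conv_lhs => rw [← hmod]
          ring
        show L (p ^ (k + 1) * (s %ₘ p)) = L (p ^ (k + 1) * s)
        rw [hsplit2, map_add]
        have hz : L (p ^ (k + 2) * (s /ₘ p)) = 0 := (hLzero _).mpr ⟨_, rfl⟩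
        rw [hz, add_zero]
    have hrank1 : Module.finrank F (W ⊓ V₁ : Submodule F V) ≤ d := by
      calc Module.finrank F (W ⊓ V₁ : Submodule F V)
          ≤ Module.finrank F (Submodule.map T (Polynomial.degreeLT F d)) :=
            Submodule.finrank_mono hsub
        _ ≤ Module.finrank F (Polynomial.degreeLT F d) :=
            Submodule.finrank_map_le T (Polynomial.degreeLT F d)
        _ = d := by
            rw [(Polynomial.degreeLTEquiv F d).finrank_eq, Module.finrank_fin_fun]
    have hWnot : ¬ W ≤ V₁ := by
      intro hle
      have heq : W ⊓ V₁ = W := inf_eq_left.mpr hle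
      rw [heq, hr] at hrank1
      have h2d : 2 * d ≤ r * d := Nat.mul_le_mul_right d hr1
      omega
    obtain ⟨w, hwW, hwV₁⟩ := SetLike.not_le_iff_exists.mp hWnot
    obtain ⟨u, hu, q, hwdec⟩ := hdec w
    refine ⟨u, hu, ?_, ?_⟩
    · intro h0
      apply hwV₁
      rw [hwdec, h0, zero_add]
      exact ⟨q, rfl⟩
    · have hw0 : aeval x p w = 0 := hwW
      have h1 : aeval x p u + L (p * q) = 0 := by
        rw [hwdec, map_add] at hw0
        rw [← hw0]
        congr 1
        rw [hLval, hLval, aeval_mul_apply]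
      have h2 : aeval x p u ∈ U := aeval_mem_inv x U hUinv p u hu
      have h3 : aeval x p u ∈ U ⊓ V₁ := by
        refine ⟨h2, ?_⟩
        rw [eq_neg_of_add_eq_zero_left h1]
        exact V₁.neg_mem ⟨p * q, rfl⟩
      rw [hUV₁, Submodule.mem_bot] at h3
      exact h3
  -- F. the projection and the map g
  have hcompl : IsCompl V₁ U := ⟨disjoint_iff.mpr (by rw [inf_comm]; exact hUV₁),
    codisjoint_iff.mpr (by rw [sup_comm]; exact hsplit)⟩
  set proj : V →ₗ[F] V₁ := V₁.projectionOnto U hcompl with hproj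
  set M : F[X] →ₗ[F] V := aevalAt x w₀ with hM
  have hLM : LinearMap.ker L ≤ LinearMap.ker M := by
    intro q hq
    obtain ⟨s, rfl⟩ := hann q (by exact hq)
    show aeval x _ w₀ = 0
    rw [aeval_mul_apply, hPm_apply]
  set φ : V₁ →ₗ[F] V :=
    ((LinearMap.ker L).liftQ M hLM).comp L.quotKerEquivRange.symm.toLinearMap with hφdef
  have hφ : ∀ q : F[X], φ ⟨L q, ⟨q, rfl⟩⟩ = aeval x q w₀ := by
    intro q
    have h1 : L.quotKerEquivRange (Submodule.Quotient.mk q) = ⟨L q, ⟨q, rfl⟩⟩ :=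
      Subtype.ext (L.quotKerEquivRange_apply_mk q)
    have h2 : L.quotKerEquivRange.symm ⟨L q, ⟨q, rfl⟩⟩ = Submodule.Quotient.mk q := by
      rw [LinearEquiv.symm_apply_eq, h1]
    show ((LinearMap.ker L).liftQ M hLM) (L.quotKerEquivRange.symm ⟨L q, ⟨q, rfl⟩⟩) = _
    rw [h2, Submodule.liftQ_apply]
    rfl
  set g : Module.End F V := φ.comp proj with hgdef
  set h' : Module.End F V := V₁.subtype.comp proj with hh'def
  have hprojU : ∀ u ∈ U, proj u = 0 := fun u hu =>
    Submodule.projectionOnto_apply_right hcompl ⟨u, hu⟩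
  have hprojL : ∀ q : F[X], proj (L q) = ⟨L q, ⟨q, rfl⟩⟩ := fun q =>
    Submodule.projectionOnto_apply_left hcompl ⟨L q, ⟨q, rfl⟩⟩
  have hgU : ∀ u ∈ U, g u = 0 := by
    intro u hu
    show φ (proj u) = 0
    rw [hprojU u hu, map_zero]
  have hgL : ∀ q : F[X], g (L q) = aeval x q w₀ := by
    intro q
    show φ (proj (L q)) = _
    rw [hprojL q, hφ q]
  have hh'U : ∀ u ∈ U, h' u = 0 := by
    intro u hu
    show V₁.subtype (proj u) = 0
    rw [hprojU u hu, map_zero]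
  have hh'L : ∀ q : F[X], h' (L q) = L q := by
    intro q
    show V₁.subtype (proj (L q)) = L q
    rw [hprojL q]; rfl
  have hxL : ∀ q : F[X], x (L q) = L (X * q) := by
    intro q
    show x (aeval x q v₁) = aeval x (X * q) v₁
    rw [aeval_mul_apply, aeval_X]
  -- commutation
  have hgcomm : g * x = x * g := by
    apply LinearMap.ext
    intro v
    obtain ⟨u, hu, q, rfl⟩ := hdec v
    have h1 : (g * x) (u + L q) = aeval x (X * q) w₀ := by
      show g (x (u + L q)) = _
      rw [map_add, hxL, map_add, hgU _ (hUinv u hu), hgL, zero_add]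
    have h2 : (x * g) (u + L q) = aeval x (X * q) w₀ := by
      show x (g (u + L q)) = _
      rw [map_add, hgU u hu, hgL, zero_add, aeval_mul_apply, aeval_X]
    rw [h1, h2]
  have hh'comm : h' * x = x * h' := by
    apply LinearMap.ext
    intro v
    obtain ⟨u, hu, q, rfl⟩ := hdec v
    have h1 : (h' * x) (u + L q) = L (X * q) := by
      show h' (x (u + L q)) = _
      rw [map_add, hxL, map_add, hh'U _ (hUinv u hu), hh'L, zero_add]
    have h2 : (x * h') (u + L q) = L (X * q) := by
      show x (h' (u + L q)) = _
      rw [map_add, hh'U u hu, hh'L, zero_add, hxL]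
    rw [h1, h2]
  -- key mapping properties of g
  have hgW : ∀ w : V, aeval x p w = 0 → g w = 0 := by
    intro w hw
    obtain ⟨u, hu, q, rfl⟩ := hdec w
    rw [map_add, hgU u hu, hgL, zero_add]
    have h1 : aeval x p u + L (p * q) = 0 := by
      rw [map_add] at hw
      rw [← hw]
      congr 1
      rw [hLval, hLval, aeval_mul_apply]
    have h2 : aeval x p u ∈ U := aeval_mem_inv x U hUinv p u hu
    have h3 : L (p * q) ∈ U ⊓ V₁ :=
      ⟨by rw [eq_neg_of_add_eq_zero_right h1]; exact U.neg_mem h2, ⟨_, rfl⟩⟩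
    rw [hUV₁, Submodule.mem_bot] at h3
    have h4 : p ^ (k + 1) ∣ q := by
      have h5 : p * p ^ (k + 1) ∣ p * q := by
        rw [← pow_succ']; exact (hLzero _).mp h3
      exact (mul_dvd_mul_iff_left hp0).mp h5
    obtain ⟨s, rfl⟩ := h4
    rw [mul_comm (p ^ (k + 1)) s, aeval_mul_apply]
    have h6 : aeval x (p ^ (k + 1)) w₀ = 0 := by
      rw [pow_succ, aeval_mul_apply, hPw₀, map_zero]
    rw [h6, map_zero]
  have hgV : ∀ v : V, aeval x p (g v) = 0 := by
    intro v
    obtain ⟨u, hu, q, rfl⟩ := hdec v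
    rw [map_add, hgU u hu, hgL, zero_add, ← aeval_mul_apply, mul_comm, aeval_mul_apply,
      hPw₀, map_zero]
  -- the ideal J
  set C := lieCentralizer F x with hC
  set Jsub : Submodule F C :=
    { carrier := {g' : C | (∀ w : V, aeval x p w = 0 → (g' : Module.End F V) w = 0) ∧
        (∀ v : V, aeval x p ((g' : Module.End F V) v) = 0)}
      add_mem' := by
        rintro a b ⟨ha1, ha2⟩ ⟨hb1, hb2⟩
        constructor
        · intro w hw
          show ((a : Module.End F V) + b) w = 0
          rw [LinearMap.add_apply, ha1 w hw, hb1 w hw, add_zero]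
        · intro v
          show aeval x p (((a : Module.End F V) + b) v) = 0
          rw [LinearMap.add_apply, map_add, ha2 v, hb2 v, add_zero]
      zero_mem' := by
        constructor
        · intro w _; rfl
        · intro v; show aeval x p ((0 : Module.End F V) v) = 0; simp
      smul_mem' := by
        rintro c a ⟨ha1, ha2⟩
        constructor
        · intro w hw
          show (c • (a : Module.End F V)) w = 0
          rw [LinearMap.smul_apply, ha1 w hw, smul_zero]
        · intro v
          show aeval x p ((c • (a : Module.End F V)) v) = 0
          rw [LinearMap.smul_apply, map_smul, ha2 v, smul_zero] } with hJsub
  -- commutation with aeval x p for members of the centralizer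
  have hcen : ∀ y : C, ∀ w : V, aeval x p ((y : Module.End F V) w) =
      (y : Module.End F V) (aeval x p w) := by
    intro y w
    have := commute_aeval x (y : Module.End F V) y.2 p
    exact (LinearMap.ext_iff.mp this.symm w)
  set J : LieIdeal F C :=
    { toSubmodule := Jsub
      lie_mem := by
        rintro y a ⟨ha1, ha2⟩
        have hbr : ((⁅y, a⁆ : C) : Module.End F V) =
            (y : Module.End F V) * a - (a : Module.End F V) * y := by
          rw [LieSubalgebra.coe_bracket, Ring.lie_def]
        constructor
        · intro w hw
          show ((⁅y, a⁆ : C) : Module.End F V) w = 0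
          rw [hbr]
          have h1 : (a : Module.End F V) ((y : Module.End F V) w) = 0 := by
            apply ha1
            rw [hcen y w, hw, map_zero]
          have h2 : (a : Module.End F V) w = 0 := ha1 w hw
          simp [LinearMap.sub_apply, Module.End.mul_apply, h1, h2]
        · intro v
          show aeval x p (((⁅y, a⁆ : C) : Module.End F V) v) = 0
          rw [hbr]
          have h1 : aeval x p ((y : Module.End F V) ((a : Module.End F V) v)) = 0 := by
            rw [hcen y _, ha2 v, map_zero]
          have h2 : aeval x p ((a : Module.End F V) ((y : Module.End F V) v)) = 0 :=
            ha2 _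
          simp [LinearMap.sub_apply, Module.End.mul_apply, h1, h2] } with hJ
  have habelian : ∀ a b : C, a ∈ J → b ∈ J → ⁅a, b⁆ = 0 := by
    rintro a b ⟨ha1, ha2⟩ ⟨hb1, hb2⟩
    apply Subtype.ext
    rw [LieSubalgebra.coe_bracket, Ring.lie_def]
    apply LinearMap.ext
    intro v
    have h1 : (a : Module.End F V) ((b : Module.End F V) v) = 0 := ha1 _ (hb2 v)
    have h2 : (b : Module.End F V) ((a : Module.End F V) v) = 0 := hb1 _ (ha2 v)
    simp [LinearMap.sub_apply, Module.End.mul_apply, h1, h2]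
  set gC : C := ⟨g, hgcomm⟩ with hgC
  set hC' : C := ⟨h', hh'comm⟩ with hhC
  have hgJ : gC ∈ J := ⟨hgW, hgV⟩
  have hL1 : L 1 = v₁ := by show aeval x 1 v₁ = v₁; simp
  have hnc : ¬ J ≤ LieAlgebra.center F C := by
    intro hle
    have hz := hle hgJ
    rw [LieAlgebra.center, LieModule.mem_maxTrivSubmodule] at hz
    have := hz hC'
    have hcoe : ((⁅hC', gC⁆ : C) : Module.End F V) = 0 := by rw [this]; rfl
    rw [LieSubalgebra.coe_bracket, Ring.lie_def] at hcoe
    have := LinearMap.ext_iff.mp hcoe v₁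
    rw [LinearMap.sub_apply, Module.End.mul_apply, Module.End.mul_apply] at this
    have e1 : (gC : Module.End F V) v₁ = w₀ := by
      show g v₁ = w₀
      rw [← hL1, hgL]; simp
    have e2 : (hC' : Module.End F V) v₁ = v₁ := by
      show h' v₁ = v₁
      conv_lhs => rw [← hL1]
      rw [hh'L, hL1]
    have e3 : (hC' : Module.End F V) w₀ = 0 := hh'U w₀ hw₀U
    rw [e2, e1, e3] at this
    simp only [LinearMap.zero_apply, zero_sub, neg_eq_zero] at this
    exact hw₀ne this
  refine ⟨⟨J, habelian, hnc⟩, ?_⟩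
  intro hred
  have : IsLieAbelian J := by
    constructor
    intro a b
    have h0 := habelian a.1 b.1 a.2 b.2
    exact Subtype.ext (show ⁅(a : C), (b : C)⁆ = (0 : C) from h0)
  exact hnc (hred J inferInstance)
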